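/- Let K₁/k and K₂/k be purely inseparable subextensions of a common extension, which are k-linearly disjoint, and let B₁, B₂ be r-bases of K₁/k and K₂/k respectively (K₁/k, K₂/k of finite exponent). Then B₁ ∪ B₂ is an r-basis of K₁K₂/k, and B₁ is an r-basis of K₁K₂/K₂. In particular di(K₁K₂/k) = di(K₁/k) + di(K₂/k) and di(K₁K₂/K₂) = di(K₁/k). -/

import Mathlib

open IntermediateField

variable (p : ℕ) (k K : Type*) [Field k] [Field K] [Algebra k K]

/-- `K₁` and `K₂` are `k`-linearly disjoint: every finite family of elements of `K₁` that is
linearly independent over `k` remains linearly independent over `K₂`. -/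
def LinDisjBase (K₁ K₂ : IntermediateField k K) : Prop :=
  ∀ (m : ℕ) (v : Fin m → K), (∀ i, v i ∈ K₁) →
    LinearIndependent k v → LinearIndependent ↥K₂ v

/-- `B` is an r-basis (minimal generating set) of `E` over the intermediate field `F`
(adjunction performed over `k`, i.e. generators over `F` mean `k(F ∪ B) = E`). -/
def IsRBasisRel (F E : IntermediateField k K) (B : Set K) : Prop :=
  IntermediateField.adjoin k ((F : Set K) ∪ B) = E ∧
    ∀ x ∈ B, x ∉ IntermediateField.adjoin k ((F : Set K) ∪ (B \ {x}))

variable {p k K}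

/-- Adjoining the bottom field together with a set is the same as adjoining the set. -/
lemma aux_adjoin_bot_union (S : Set K) :
    IntermediateField.adjoin k ((↑(⊥ : IntermediateField k K) : Set K) ∪ S)
      = IntermediateField.adjoin k S := by
  refine le_antisymm (adjoin_le_iff.2 (Set.union_subset ?_ (subset_adjoin k S))) ?_
  · exact fun y hy => (bot_le : (⊥ : IntermediateField k K) ≤ adjoin k S) hy
  · exact IntermediateField.adjoin.mono k _ _ Set.subset_union_right

/-- The one-universe set version of linear disjointness transfer. -/
lemma aux_hd (K₁ K₂ : IntermediateField k K) (hdisj : LinDisjBase k K K₁ K₂)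
    {ι : Type*} (v : ι → K) (hv : ∀ i, v i ∈ K₁) (hli : LinearIndependent k v) :
    LinearIndependent ↥K₂ v := by
  rw [linearIndependent_iff_finset_linearIndependent]
  intro s
  have e := s.equivFin
  have h1 : LinearIndependent k ((v ∘ (Subtype.val : s → ι)) ∘ e.symm) :=
    hli.comp _ (Subtype.val_injective.comp e.symm.injective)
  have h2 := hdisj s.card ((v ∘ (Subtype.val : s → ι)) ∘ e.symm) (fun i => hv _) h1
  have h3 := h2.comp e e.injective
  have : v ∘ (Subtype.val : s → ι) = ((v ∘ (Subtype.val : s → ι)) ∘ e.symm) ∘ e := by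
    funext i; simp
  rw [this]; exact h3

/-- Key span lemma: if `x ∈ K₁` lies in the `K₂`-span of a set `W ⊆ K₁`, then it lies
in the `k`-span, by linear disjointness. -/
lemma aux_span (K₁ K₂ : IntermediateField k K)
    (hd : ∀ s : Set K, (∀ y ∈ s, y ∈ K₁) → LinearIndependent k ((↑) : s → K) →
      LinearIndependent ↥K₂ ((↑) : s → K))
    {x : K} (hx : x ∈ K₁) {W : Set K} (hW : W ⊆ (K₁ : Set K))
    (hxs : x ∈ Submodule.span ↥K₂ W) : x ∈ Submodule.span k W := by
  obtain ⟨T, hTW, hxT⟩ := Submodule.mem_span_finite_of_mem_span hxs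
  obtain ⟨b, hbT, hspan, hli⟩ := exists_linearIndependent k (T : Set K)
  by_cases hxb : x ∈ Submodule.span k b
  · rw [hspan] at hxb
    exact Submodule.span_mono hTW hxb
  · exfalso
    have hxnb : x ∉ b := fun h => hxb (Submodule.subset_span h)
    have hli' : LinearIndependent k ((↑) : ↥(insert x b) → K) := LinearIndepOn.id_insert hli hxb
    have hvals : ∀ y ∈ insert x b, y ∈ K₁ := by
      rintro y (rfl | hy)
      · exact hx
      · exact hW (hTW (hbT hy))
    have hliK₂ : LinearIndependent ↥K₂ ((↑) : ↥(insert x b) → K) := hd _ hvals hli'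
    have hxb₂ : x ∈ Submodule.span ↥K₂ b := by
      have h1 : Submodule.span k b ≤
          Submodule.restrictScalars k (Submodule.span ↥K₂ b) :=
        Submodule.span_le.2 fun y hy => Submodule.subset_span hy
      have hT : (T : Set K) ⊆ ↑(Submodule.span ↥K₂ b) := by
        intro y hy
        exact h1 (hspan ▸ Submodule.subset_span hy)
      exact Submodule.span_le.2 hT hxT
    have hi : (⟨x, Set.mem_insert x b⟩ : ↥(insert x b)) ∉
        {j : ↥(insert x b) | (j : K) ≠ x} := by simp
    refine hliK₂.notMem_span_image hi ?_
    have himg : b ⊆ Subtype.val '' {j : ↥(insert x b) | (j : K) ≠ x} := by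
      intro y hy
      exact ⟨⟨y, Set.mem_insert_of_mem _ hy⟩, fun h => hxnb (h ▸ hy), rfl⟩
    exact Submodule.span_mono himg hxb₂

/-- Key adjoin lemma: if `x ∈ K₁` lies in `k(K₂ ∪ S)` with `S ⊆ K₁`, then `x ∈ k(S)`. -/
lemma aux_adjoin [IsPurelyInseparable k K] (K₁ K₂ : IntermediateField k K)
    (hd : ∀ s : Set K, (∀ y ∈ s, y ∈ K₁) → LinearIndependent k ((↑) : s → K) →
      LinearIndependent ↥K₂ ((↑) : s → K))
    {x : K} (hx : x ∈ K₁) {S : Set K} (hS : S ⊆ (K₁ : Set K))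
    (hmem : x ∈ IntermediateField.adjoin k ((K₂ : Set K) ∪ S)) :
    x ∈ IntermediateField.adjoin k S := by
  have halg : ∀ y ∈ ((K₂ : Set K) ∪ S), IsAlgebraic k y := fun y _ =>
    (IsPurelyInseparable.isIntegral' k y).isAlgebraic
  have hx1 : x ∈ Algebra.adjoin k ((K₂ : Set K) ∪ S) := by
    have h := IntermediateField.adjoin_toSubalgebra_of_isAlgebraic halg
    rw [← h]; exact hmem
  have h1 : Algebra.adjoin k ((K₂ : Set K) ∪ S) ≤
      Subalgebra.restrictScalars k (Algebra.adjoin ↥K₂ S) := by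
    rw [Algebra.adjoin_le_iff]
    rintro y (hy | hy)
    · exact Subalgebra.algebraMap_mem (Algebra.adjoin ↥K₂ S) (⟨y, hy⟩ : ↥K₂)
    · exact Algebra.subset_adjoin (R := ↥K₂) hy
  have hx2 : x ∈ Submodule.span ↥K₂ ((Submonoid.closure S : Submonoid K) : Set K) := by
    have h2 := h1 hx1
    rw [Subalgebra.mem_restrictScalars, ← Subalgebra.mem_toSubmodule,
      Algebra.adjoin_eq_span] at h2
    exact h2
  have hW : ((Submonoid.closure S : Submonoid K) : Set K) ⊆ (K₁ : Set K) := by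
    intro y hy
    refine Submonoid.closure_induction (fun z hz => hS hz) (one_mem K₁)
      (fun a b _ _ ha hb => mul_mem ha hb) hy
  have hx3 := aux_span K₁ K₂ hd hx hW hx2
  have hx4 : x ∈ Algebra.adjoin k S := by
    rw [← Subalgebra.mem_toSubmodule, Algebra.adjoin_eq_span]
    exact hx3
  exact IntermediateField.algebra_adjoin_le_adjoin k S hx4

variable (p k K)

/-- If `K₁/k`, `K₂/k` are purely inseparable of finite exponent and
`k`-linearly disjoint, with r-bases `B₁`, `B₂`, then `B₁ ∪ B₂` is an r-basis of `K₁K₂/k`,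
`B₁` is an r-basis of `K₁K₂/K₂`, and `di(K₁K₂/k) = di(K₁/k) + di(K₂/k)`,
`di(K₁K₂/K₂) = di(K₁/k)` (cardinalities of the corresponding r-bases). -/
theorem stmt_8 (hp : p.Prime) [CharP K p] [IsPurelyInseparable k K]
    (K₁ K₂ : IntermediateField k K)
    (e₁ : ℕ) (he₁ : ∀ x ∈ K₁, x ^ p ^ e₁ ∈ (⊥ : IntermediateField k K))
    (e₂ : ℕ) (he₂ : ∀ x ∈ K₂, x ^ p ^ e₂ ∈ (⊥ : IntermediateField k K))
    (hdisj : LinDisjBase k K K₁ K₂)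
    (B₁ B₂ : Set K)
    (h₁ : IsRBasisRel k K ⊥ K₁ B₁) (h₂ : IsRBasisRel k K ⊥ K₂ B₂) :
    IsRBasisRel k K ⊥ (K₁ ⊔ K₂) (B₁ ∪ B₂) ∧
    IsRBasisRel k K K₂ (K₁ ⊔ K₂) B₁ ∧
    Cardinal.mk ↥(B₁ ∪ B₂) = Cardinal.mk ↥B₁ + Cardinal.mk ↥B₂ := by
  classical
  have hB₁ : B₁ ⊆ (K₁ : Set K) := by
    intro y hy
    have := h₁.1
    rw [← this]
    exact subset_adjoin k _ (Or.inr hy)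
  have hB₂ : B₂ ⊆ (K₂ : Set K) := by
    intro y hy
    have := h₂.1
    rw [← this]
    exact subset_adjoin k _ (Or.inr hy)
  have hd₁ : ∀ s : Set K, (∀ y ∈ s, y ∈ K₁) → LinearIndependent k ((↑) : s → K) →
      LinearIndependent ↥K₂ ((↑) : s → K) := fun s hs hli =>
    aux_hd K₁ K₂ hdisj _ (fun i => hs _ i.2) hli
  have H : K₁.LinearDisjoint K₂ := by
    have b := Module.Basis.ofVectorSpace k ↥K₁
    refine IntermediateField.LinearDisjoint.of_basis_left b ?_
    have hli : LinearIndependent k (K₁.val ∘ b) :=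
      b.linearIndependent.map' K₁.val.toLinearMap
        (LinearMap.ker_eq_bot_of_injective K₁.val.injective)
    exact aux_hd K₁ K₂ hdisj _ (fun i => (b i).2) hli
  have hd₂ : ∀ s : Set K, (∀ y ∈ s, y ∈ K₂) → LinearIndependent k ((↑) : s → K) →
      LinearIndependent ↥K₁ ((↑) : s → K) := by
    intro s hs hli
    have hb' : LinearIndependent k (fun y : s => (⟨y.1, hs _ y.2⟩ : ↥K₂)) := by
      apply LinearIndependent.of_comp K₂.val.toLinearMap
      exact hli
    have h := H.linearIndependent_right hb'
    exact h
  have hK₁ : IntermediateField.adjoin k B₁ = K₁ := by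
    rw [← aux_adjoin_bot_union (k := k) B₁]
    exact h₁.1
  have hK₂ : IntermediateField.adjoin k B₂ = K₂ := by
    rw [← aux_adjoin_bot_union (k := k) B₂]
    exact h₂.1
  have min₂ : ∀ x ∈ B₁, x ∉ IntermediateField.adjoin k ((K₂ : Set K) ∪ (B₁ \ {x})) := by
    intro x hx hmem
    have hS : B₁ \ {x} ⊆ (K₁ : Set K) := fun y hy => hB₁ hy.1
    have hmem' := aux_adjoin K₁ K₂ hd₁ (hB₁ hx) hS hmem
    exact h₁.2 x hx (by rwa [aux_adjoin_bot_union])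
  have gen₁ : IntermediateField.adjoin k
      ((↑(⊥ : IntermediateField k K) : Set K) ∪ (B₁ ∪ B₂)) = K₁ ⊔ K₂ := by
    rw [aux_adjoin_bot_union, IntermediateField.adjoin_union, hK₁, hK₂]
  have min₁ : ∀ x ∈ B₁ ∪ B₂, x ∉ IntermediateField.adjoin k
      ((↑(⊥ : IntermediateField k K) : Set K) ∪ ((B₁ ∪ B₂) \ {x})) := by
    intro x hx hmem
    rw [aux_adjoin_bot_union] at hmem
    rcases hx with hx | hx
    · have hsub : (B₁ ∪ B₂) \ {x} ⊆ (K₂ : Set K) ∪ (B₁ \ {x}) := by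
        rintro y ⟨hy | hy, hne⟩
        · exact Or.inr ⟨hy, hne⟩
        · exact Or.inl (hB₂ hy)
      have hmem' : x ∈ IntermediateField.adjoin k ((K₂ : Set K) ∪ (B₁ \ {x})) :=
        IntermediateField.adjoin.mono k _ _ hsub hmem
      have := aux_adjoin K₁ K₂ hd₁ (hB₁ hx) (fun y hy => hB₁ hy.1) hmem'
      exact h₁.2 x hx (by rwa [aux_adjoin_bot_union])
    · have hsub : (B₁ ∪ B₂) \ {x} ⊆ (K₁ : Set K) ∪ (B₂ \ {x}) := by
        rintro y ⟨hy | hy, hne⟩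
        · exact Or.inl (hB₁ hy)
        · exact Or.inr ⟨hy, hne⟩
      have hmem' : x ∈ IntermediateField.adjoin k ((K₁ : Set K) ∪ (B₂ \ {x})) :=
        IntermediateField.adjoin.mono k _ _ hsub hmem
      have := aux_adjoin K₂ K₁ hd₂ (hB₂ hx) (fun y hy => hB₂ hy.1) hmem'
      exact h₂.2 x hx (by rwa [aux_adjoin_bot_union])
  have gen₂ : IntermediateField.adjoin k ((K₂ : Set K) ∪ B₁) = K₁ ⊔ K₂ := by
    rw [IntermediateField.adjoin_union, IntermediateField.adjoin_self, hK₁, sup_comm]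
  have hdisjB : Disjoint B₁ B₂ := by
    rw [Set.disjoint_left]
    intro x hx1 hx2
    exact min₂ x hx1 (subset_adjoin k _ (Or.inl (hB₂ hx2)))
  exact ⟨⟨gen₁, min₁⟩, ⟨gen₂, min₂⟩, Cardinal.mk_union_of_disjoint hdisjB⟩
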